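/- Let n ≥ 3, let c₁,…,cₙ be nonzero integers such that ∑_{j∈J} c_j = 0 for some nonempty J ⊆ {1,…,n}, and for each i = 1,…,n let k_i ≥ 2. Then the equation ∑_{i=1}^n c_i · ∏_{j=1}^{k_i} y_{i,j} = 0 is partition regular on ℕ with full injectivity: for every finite partition of ℕ there is a monochromatic solution in which all the variables y_{i,j} (i = 1,…,n, j = 1,…,k_i) take pairwise distinct values. -/

import Mathlib

/- `ℕ+` plays the role of the paper's `ℕ` (the positive integers). -/

open Finset

attribute [local instance] Ultrafilter.semigroup Ultrafilter.mul


open Finset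

/-- Finitary van der Waerden, from Hales–Jewett. -/
theorem vdwNat (t r : ℕ) : ∃ N : ℕ, 0 < N ∧ ∀ C : ℕ → Fin r, ∃ a d : ℕ, 0 < a ∧ 0 < d ∧
    a + t * d ≤ N ∧ ∀ s, s ≤ t → C (a + s * d) = C a := by
  obtain ⟨ι, _inst, hι⟩ := Combinatorics.Line.exists_mono_in_high_dimension (Fin (t+1)) (Fin r)
  refine ⟨1 + t * Fintype.card ι + t * Fintype.card ι, by positivity, fun C => ?_⟩
  obtain ⟨l, c0, hl⟩ := hι fun v => C (1 + ∑ i, (v i : ℕ))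
  classical
  set W : Finset ι := Finset.univ.filter (fun i => l.idxFun i = none) with hW
  have hWpos : 0 < W.card := by
    obtain ⟨i, hi⟩ := l.proper
    exact Finset.card_pos.mpr ⟨i, by simp [hW, hi]⟩
  set F : ℕ := ∑ i ∈ Wᶜ, ((l.idxFun i).getD 0 : ℕ) with hF
  have key : ∀ x : Fin (t+1), (∑ i, ((l x i : Fin (t+1)) : ℕ)) = (x : ℕ) * W.card + F := by
    intro x
    have h1 : ∀ i, ((l x i : Fin (t+1)) : ℕ) = if i ∈ W then (x : ℕ) else ((l.idxFun i).getD 0 : ℕ) := by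
      intro i
      by_cases hi : i ∈ W
      · have : l.idxFun i = none := by simpa [hW] using hi
        simp [Combinatorics.Line.coe_apply, this, hi]
      · have : l.idxFun i ≠ none := by simpa [hW] using hi
        rcases h' : l.idxFun i with _ | a
        · exact absurd h' this
        · simp [Combinatorics.Line.coe_apply, h', hi]
    have e1 : Finset.univ.filter (fun i => i ∈ W) = W := by ext i; simp
    have e2 : Finset.univ.filter (fun i => ¬ i ∈ W) = Wᶜ := by ext i; simp [Finset.mem_compl]
    rw [Finset.sum_congr rfl fun i _ => h1 i, Finset.sum_ite, e1, e2, Finset.sum_const,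
      smul_eq_mul, mul_comm, hF]
  refine ⟨1 + F, W.card, by omega, hWpos, ?_, ?_⟩
  · have hFle : F ≤ t * Fintype.card ι := by
      calc F ≤ ∑ _i ∈ Wᶜ, t := Finset.sum_le_sum fun i _ => Nat.lt_succ_iff.mp (Fin.is_lt _)
        _ ≤ t * Fintype.card ι := by
          rw [Finset.sum_const, smul_eq_mul, mul_comm]
          exact Nat.mul_le_mul_left t (Finset.card_le_card (Finset.subset_univ _))
    have hWle : W.card ≤ Fintype.card ι := Finset.card_le_card (Finset.subset_univ _)
    have := Nat.mul_le_mul_left t hWle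
    omega
  · intro s hs
    have hx : ∀ x : Fin (t+1), C (1 + ((x : ℕ) * W.card + F)) = c0 := by
      intro x
      have := hl x
      simpa only [key x] using this
    have h1 := hx ⟨s, Nat.lt_succ_of_le hs⟩
    have h2 := hx ⟨0, Nat.succ_pos t⟩
    simp only [] at h1 h2
    have e1 : 1 + F + s * W.card = 1 + (s * W.card + F) := by ring
    have e2 : 1 + F = 1 + ((0 : ℕ) * W.card + F) := by ring
    rw [e1, e2, h1, h2]


/-- Brauer-type theorem: monochromatic `{a + μ d : μ ≤ 2p} ∪ {Λ d}`. -/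
theorem brauerNat (Λ p : ℕ) (hΛ : 0 < Λ) (hp : 0 < p) (r : ℕ) :
    ∃ N : ℕ, 0 < N ∧ ∀ C : ℕ → Fin r, ∃ a d : ℕ, 0 < a ∧ 0 < d ∧
      a + 2 * p * d ≤ N ∧ Λ * d ≤ N ∧ ∀ μ, μ ≤ 2 * p → C (a + μ * d) = C (Λ * d) := by
  induction r with
  | zero => exact ⟨1, Nat.one_pos, fun C => (C 1).elim0⟩
  | succ r IH =>
    obtain ⟨M, hMpos, hIH⟩ := IH
    obtain ⟨Nv, hNvpos, hvdw⟩ := vdwNat (2 * p * M) (r + 1)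
    refine ⟨Λ * M * Nv + Nv, by positivity, fun C => ?_⟩
    obtain ⟨a₀, d₀, ha₀, hd₀, hbound₀, hmono₀⟩ := hvdw C
    have hd₀Nv : d₀ ≤ Nv := by
      have hx : (1:ℕ) ≤ 2 * p * M := Nat.one_le_iff_ne_zero.mpr (by positivity)
      have h1 : 1 * d₀ ≤ 2 * p * M * d₀ := Nat.mul_le_mul_right d₀ hx
      omega
    by_cases hcase : ∃ μ, 1 ≤ μ ∧ μ ≤ M ∧ C (Λ * μ * d₀) = C a₀
    · obtain ⟨μ, hμ1, hμM, hμχ⟩ := hcase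
      refine ⟨a₀, μ * d₀, ha₀, by positivity, ?_, ?_, ?_⟩
      · have : 2 * p * (μ * d₀) ≤ 2 * p * M * d₀ := by
          rw [← mul_assoc]
          exact Nat.mul_le_mul_right d₀ (Nat.mul_le_mul_left _ hμM)
        omega
      · calc Λ * (μ * d₀) ≤ Λ * (M * Nv) := by
              exact Nat.mul_le_mul_left Λ (Nat.mul_le_mul hμM hd₀Nv)
          _ ≤ Λ * M * Nv + Nv := by rw [mul_assoc]; omega
      · intro ν hν
        have h1 : C (a₀ + ν * μ * d₀) = C a₀ := hmono₀ (ν * μ) (Nat.mul_le_mul hν hμM)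
        have e1 : a₀ + ν * (μ * d₀) = a₀ + ν * μ * d₀ := by ring
        have e2 : Λ * (μ * d₀) = Λ * μ * d₀ := by ring
        rw [e1, e2, h1, hμχ]
    · push_neg at hcase
      classical
      set χ := C a₀ with hχ
      have hr : Nonempty (Fin r) := by
        rcases Nat.eq_zero_or_pos r with hr0 | hrpos
        · exfalso
          apply hcase 1 le_rfl hMpos
          subst hr0
          rw [Fin.fin_one_eq_zero (C (Λ * 1 * d₀)), Fin.fin_one_eq_zero χ]
        · exact ⟨⟨0, hrpos⟩⟩
      obtain ⟨z0⟩ := hr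
      set f : Fin (r + 1) → Fin r := fun c => ((finSuccEquiv' χ) c).getD z0 with hf
      have hfinj : ∀ x y : Fin (r + 1), x ≠ χ → y ≠ χ → f x = f y → x = y := by
        intro x y hx hy hxy
        have ex : (finSuccEquiv' χ) x ≠ none := by
          intro h
          exact hx (by simpa using congrArg (finSuccEquiv' χ).symm h)
        have ey : (finSuccEquiv' χ) y ≠ none := by
          intro h
          exact hy (by simpa using congrArg (finSuccEquiv' χ).symm h)
        obtain ⟨u, hu⟩ := Option.ne_none_iff_exists'.mp ex
        obtain ⟨v, hv⟩ := Option.ne_none_iff_exists'.mp ey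
        rw [hf] at hxy
        simp only [hu, hv, Option.getD_some] at hxy
        apply (finSuccEquiv' χ).injective
        rw [hu, hv, hxy]
      obtain ⟨a'', d'', ha'', hd'', hb1, hb2, hmono''⟩ := hIH fun x => f (C (Λ * x * d₀))
      have harg : ∀ y, 1 ≤ y → y ≤ M → C (Λ * y * d₀) ≠ χ := fun y h1 h2 => hcase y h1 h2
      refine ⟨Λ * a'' * d₀, Λ * d'' * d₀, by positivity, by positivity, ?_, ?_, ?_⟩
      · calc Λ * a'' * d₀ + 2 * p * (Λ * d'' * d₀) = Λ * (a'' + 2 * p * d'') * d₀ := by ring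
          _ ≤ Λ * M * Nv := by
            apply Nat.mul_le_mul _ hd₀Nv
            exact Nat.mul_le_mul_left Λ hb1
          _ ≤ Λ * M * Nv + Nv := Nat.le_add_right _ _
      · calc Λ * (Λ * d'' * d₀) = Λ * (Λ * d'') * d₀ := by ring
          _ ≤ Λ * M * Nv := by
            apply Nat.mul_le_mul _ hd₀Nv
            exact Nat.mul_le_mul_left Λ hb2
          _ ≤ Λ * M * Nv + Nv := Nat.le_add_right _ _
      · intro μ hμ
        have hy1 : C (Λ * (a'' + μ * d'') * d₀) = C (Λ * (Λ * d'') * d₀) := by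
          apply hfinj
          · have hmd : μ * d'' ≤ 2 * p * d'' := Nat.mul_le_mul_right d'' hμ
            exact harg _ (by omega) (by omega)
          · have h0 : 0 < Λ * d'' := by positivity
            exact harg _ (by omega) (by omega)
          · exact hmono'' μ hμ
        have e1 : Λ * a'' * d₀ + μ * (Λ * d'' * d₀) = Λ * (a'' + μ * d'') * d₀ := by ring
        have e2 : Λ * (Λ * d'' * d₀) = Λ * (Λ * d'') * d₀ := by ring
        rw [e1, e2, hy1]


open Finset

/-- Partition-regularity (with largeness) of a single Rado equation, monochromatic version. -/
theorem radoPNat {n : ℕ} (c : Fin n → ℤ) (hc : ∀ i, c i ≠ 0) (J : Finset (Fin n))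
    (hJ : J.Nonempty) (hsum : ∑ j ∈ J, c j = 0) (r : ℕ) (C : ℕ+ → Fin r) (N : ℕ) :
    ∃ w : Fin n → ℕ+, (∀ i i', C (w i) = C (w i')) ∧ (∀ i, N < (w i : ℕ)) ∧
      (∑ i, c i * ((w i : ℕ) : ℤ)) = 0 := by
  classical
  obtain ⟨j₀, hj₀⟩ := hJ
  set σ : ℤ := ∑ i ∈ Jᶜ, c i with hσ
  set Λ : ℕ := (c j₀).natAbs with hΛdef
  have hΛ : 0 < Λ := Int.natAbs_pos.mpr (hc j₀)
  set p : ℕ := σ.natAbs + 1 with hp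
  set lam : ℤ := if 0 ≤ c j₀ then -σ else σ with hlam
  have hlamcases : lam = -σ ∨ lam = σ := by
    rw [hlam]; split
    · exact Or.inl rfl
    · exact Or.inr rfl
  obtain ⟨NB, hNBpos, hbrauer⟩ := brauerNat Λ p hΛ (Nat.succ_pos _) r
  set Np : ℕ+ := ⟨N + 1, Nat.succ_pos _⟩ with hNp
  obtain ⟨a, d, ha, hd, _, _, hmono⟩ := hbrauer (fun x => C (Np * x.toPNat'))
  set μ : Fin n → ℕ := fun i => if i = j₀ then ((p : ℤ) + lam).toNat else p with hμ
  have hμj₀ : ((μ j₀ : ℕ) : ℤ) = (p : ℤ) + lam := by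
    have h1 : μ j₀ = ((p : ℤ) + lam).toNat := by simp [hμ]
    rw [h1, Int.toNat_of_nonneg]
    rcases hlamcases with h | h <;> rw [h] <;> rw [hp] <;> push_cast <;>
      · have h1' := le_abs_self σ
        have h2' := neg_abs_le σ
        omega
  have hμle : ∀ i, μ i ≤ 2 * p := by
    intro i
    by_cases hi : i = j₀
    · have h1 : μ i = ((p : ℤ) + lam).toNat := by simp [hμ, hi]
      rw [h1]
      rcases hlamcases with h | h <;> rw [h] <;> rw [hp] <;>
        · have h1' := le_abs_self σ
          have h2' := neg_abs_le σ
          have h3' : ((σ.natAbs : ℤ)) = |σ| := (Int.abs_eq_natAbs σ).symm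
          omega
    · have h1 : μ i = p := by simp [hμ, hi]
      omega
  set w : Fin n → ℕ+ := fun i =>
    if i ∈ J then Np * (a + μ i * d).toPNat' else Np * (Λ * d).toPNat' with hw
  have hwvalN : ∀ i, (w i : ℕ) =
      if i ∈ J then (N + 1) * (a + μ i * d) else (N + 1) * (Λ * d) := by
    intro i
    rw [hw]
    by_cases hi : i ∈ J
    · simp only [if_pos hi]
      rw [PNat.mul_coe, PNat.toPNat'_coe (by omega)]
      rfl
    · simp only [if_neg hi]
      rw [PNat.mul_coe, PNat.toPNat'_coe (Nat.mul_pos hΛ hd)]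
      rfl
  refine ⟨w, ?_, ?_, ?_⟩
  · have hcol : ∀ i, C (w i) = C (Np * (Λ * d).toPNat') := by
      intro i
      rw [hw]
      by_cases hi : i ∈ J
      · simp only [if_pos hi]
        exact hmono (μ i) (hμle i)
      · simp only [if_neg hi]
    intro i i'; rw [hcol i, hcol i']
  · intro i
    rw [hwvalN i]
    have h1 : 0 < a + μ i * d := by omega
    have h2 : 0 < Λ * d := Nat.mul_pos hΛ hd
    by_cases hi : i ∈ J
    · rw [if_pos hi]
      calc N < N + 1 := Nat.lt_succ_self N
        _ = (N + 1) * 1 := (mul_one _).symm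
        _ ≤ (N + 1) * (a + μ i * d) := Nat.mul_le_mul_left _ h1
    · rw [if_neg hi]
      calc N < N + 1 := Nat.lt_succ_self N
        _ = (N + 1) * 1 := (mul_one _).symm
        _ ≤ (N + 1) * (Λ * d) := Nat.mul_le_mul_left _ h2
  · have hwval : ∀ i, ((w i : ℕ) : ℤ) =
        if i ∈ J then ((N : ℤ) + 1) * ((a : ℤ) + (μ i : ℤ) * d) else ((N : ℤ) + 1) * ((Λ : ℤ) * d) := by
      intro i
      rw [hwvalN i]
      by_cases hi : i ∈ J
      · rw [if_pos hi, if_pos hi]; push_cast; ring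
      · rw [if_neg hi, if_neg hi]; push_cast; ring
    have hsplit : (∑ i, c i * ((w i : ℕ) : ℤ)) =
        (∑ i ∈ J, c i * (((N : ℤ) + 1) * ((a : ℤ) + (μ i : ℤ) * d))) +
        (∑ i ∈ Jᶜ, c i * (((N : ℤ) + 1) * ((Λ : ℤ) * d))) := by
      rw [← Finset.sum_add_sum_compl J]
      congr 1
      · exact Finset.sum_congr rfl fun i hi => by rw [hwval i, if_pos hi]
      · exact Finset.sum_congr rfl fun i hi => by
          rw [hwval i, if_neg (by simpa using hi)]
    rw [hsplit]
    have e1 : ∀ i ∈ J, c i * (((N : ℤ) + 1) * ((a : ℤ) + (μ i : ℤ) * d)) =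
        ((N : ℤ) + 1) * (c i * ((a : ℤ) + (p : ℤ) * d)) +
        ((N : ℤ) + 1) * d * (c i * ((μ i : ℤ) - p)) := by
      intro i _; ring
    rw [Finset.sum_congr rfl e1, Finset.sum_add_distrib, ← Finset.mul_sum, ← Finset.mul_sum,
      ← Finset.sum_mul, hsum]
    have e2 : (∑ i ∈ J, c i * ((μ i : ℤ) - p)) = c j₀ * lam := by
      rw [Finset.sum_eq_single j₀]
      · rw [hμj₀]; ring
      · intro i hiJ hine
        have h1 : μ i = p := by simp [hμ, hine]
        rw [h1]; ring
      · intro h; exact absurd hj₀ h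
    rw [e2]
    have e3 : (∑ i ∈ Jᶜ, c i * (((N : ℤ) + 1) * ((Λ : ℤ) * d))) =
        ((N : ℤ) + 1) * ((Λ : ℤ) * d) * σ := by
      rw [hσ, Finset.mul_sum]
      exact Finset.sum_congr rfl fun i _ => by ring
    rw [e3]
    have e4 : c j₀ * lam = -(Λ : ℤ) * σ := by
      rw [hlam, hΛdef]
      rcases le_or_gt 0 (c j₀) with h | h
      · rw [if_pos h, Int.natAbs_of_nonneg h]; ring
      · rw [if_neg (not_le.mpr h)]
        rw [Int.ofNat_natAbs_of_nonpos h.le]; ring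
    rw [e4]; ring

variable {n : ℕ}

attribute [local instance] Ultrafilter.semigroup Ultrafilter.mul

open Finset

variable {n : ℕ}

/-- `A` contains solutions with all entries arbitrarily large. -/
def SolSet (c : Fin n → ℤ) (A : Set ℕ+) : Prop :=
  ∀ N : ℕ, ∃ w : Fin n → ℕ+, (∀ i, w i ∈ A ∧ N < (w i : ℕ)) ∧
    (∑ i, c i * ((w i : ℕ) : ℤ)) = 0

def GoodUF (c : Fin n → ℤ) : Set (Ultrafilter ℕ+) := {u | ∀ A ∈ u, SolSet c A}

theorem mem_mul_ultra {U V : Ultrafilter ℕ+} {A : Set ℕ+} :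
    A ∈ U * V ↔ {m : ℕ+ | {m' : ℕ+ | m * m' ∈ A} ∈ V} ∈ U :=
  Iff.rfl

theorem goodUF_nonempty (c : Fin n → ℤ) (hc : ∀ i, c i ≠ 0) (J : Finset (Fin n))
    (hJ : J.Nonempty) (hsum : ∑ j ∈ J, c j = 0) : (GoodUF c).Nonempty := by
  classical
  set Bad : Set (Set ℕ+) := {A | ¬ SolSet c A} with hBad
  set S : Set (Set ℕ+) := compl '' Bad with hS
  have cond : ∀ T : Finset (Set ℕ+), (↑T : Set (Set ℕ+)) ⊆ S → (⋂₀ (↑T : Set (Set ℕ+))).Nonempty := by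
    intro T hT
    by_contra hemp
    rw [Set.not_nonempty_iff_eq_empty] at hemp
    -- every x fails some B ∈ T
    have hx : ∀ x : ℕ+, ∃ B ∈ T, x ∉ B := by
      intro x
      by_contra hno
      push_neg at hno
      have : x ∈ ⋂₀ (↑T : Set (Set ℕ+)) := by
        intro B hB
        exact hno B (by exact_mod_cast hB)
      rw [hemp] at this
      exact this
    have hTcardpos : 0 < T.card := by
      rcases Finset.eq_empty_or_nonempty T with rfl | hTn
      · obtain ⟨B, hB, _⟩ := hx 1
        exact absurd hB (by simp)
      · exact Finset.card_pos.mpr hTn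
    -- a bound beyond which no bad set has solutions
    have hbadN : ∀ B ∈ T, ∃ NB : ℕ, ∀ w : Fin n → ℕ+,
        ¬ ((∀ i, w i ∈ Bᶜ ∧ NB < (w i : ℕ)) ∧ (∑ i, c i * ((w i : ℕ) : ℤ)) = 0) := by
      intro B hB
      obtain ⟨A, hAbad, hAc⟩ := hT hB
      have : ¬ SolSet c A := hAbad
      rw [SolSet] at this
      push_neg at this
      obtain ⟨NB, hNB⟩ := this
      refine ⟨NB, fun w hw => ?_⟩
      obtain ⟨h1, h2⟩ := hw
      have : A = Bᶜ := by rw [← hAc]; simp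
      exact hNB w (fun i => by rw [this]; exact h1 i) h2
    set NB : Set ℕ+ → ℕ := fun B => if h : ∃ NB : ℕ, ∀ w : Fin n → ℕ+,
        ¬ ((∀ i, w i ∈ Bᶜ ∧ NB < (w i : ℕ)) ∧ (∑ i, c i * ((w i : ℕ) : ℤ)) = 0) then h.choose else 0
      with hNBdef
    set Nstar : ℕ := T.sup NB with hNstar
    set e := T.equivFin with he
    set C : ℕ+ → Fin T.card := fun x => e ⟨(hx x).choose, (hx x).choose_spec.1⟩ with hC
    obtain ⟨w, hmono, hlarge, hsum0⟩ := radoPNat c hc J hJ hsum T.card C Nstar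
    -- all w i are colored like w 0... get the common bad set
    have hn0 : (0 : ℕ) < n := by
      obtain ⟨j, hj⟩ := hJ
      exact j.pos
    set i0 : Fin n := ⟨0, hn0⟩ with hi0
    set Bhat : Set ℕ+ := (hx (w i0)).choose with hBhat
    have hBhatT : Bhat ∈ T := (hx (w i0)).choose_spec.1
    have hall : ∀ i, w i ∉ Bhat := by
      intro i
      have hci : C (w i) = C (w i0) := hmono i i0
      rw [hC] at hci
      have h2 := e.injective hci
      have hBeq : (hx (w i)).choose = Bhat := congrArg Subtype.val h2
      rw [← hBeq]
      exact (hx (w i)).choose_spec.2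
    have hcond := hbadN Bhat hBhatT
    have hNBval : NB Bhat = hcond.choose := by rw [hNBdef]; exact dif_pos hcond
    apply hcond.choose_spec w
    refine ⟨fun i => ⟨hall i, ?_⟩, hsum0⟩
    have hle : NB Bhat ≤ Nstar := Finset.le_sup hBhatT
    have hlg := hlarge i
    omega
  obtain ⟨u, hu⟩ := Ultrafilter.exists_ultrafilter_of_finite_inter_nonempty S cond
  refine ⟨u, fun A hA => ?_⟩
  by_contra hbad
  have h1 : Aᶜ ∈ S := ⟨A, hbad, rfl⟩
  have h2 : Aᶜ ∈ u := hu h1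
  exact (Ultrafilter.compl_notMem_iff.mpr hA) h2

theorem goodUF_mul {c : Fin n → ℤ} {u v : Ultrafilter ℕ+} (hv : v ∈ GoodUF c) :
    u * v ∈ GoodUF c := by
  intro A hA
  rw [mem_mul_ultra] at hA
  obtain ⟨m, hm⟩ := Ultrafilter.nonempty_of_mem hA
  intro N
  obtain ⟨w', hw', hsum'⟩ := hv _ hm N
  refine ⟨fun i => m * w' i, fun i => ⟨(hw' i).1, ?_⟩, ?_⟩
  · have h1 := (hw' i).2
    have h2 : ((m * w' i : ℕ+) : ℕ) = (m : ℕ) * (w' i : ℕ) := rfl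
    have h3 : 1 ≤ (m : ℕ) := m.one_le
    calc N < (w' i : ℕ) := h1
      _ = 1 * (w' i : ℕ) := (one_mul _).symm
      _ ≤ (m : ℕ) * (w' i : ℕ) := Nat.mul_le_mul_right _ h3
  · have : ∀ i, (c i) * (((m * w' i : ℕ+) : ℕ) : ℤ) = (m : ℕ) * (c i * ((w' i : ℕ) : ℤ)) := by
      intro i
      have h2 : ((m * w' i : ℕ+) : ℕ) = (m : ℕ) * (w' i : ℕ) := rfl
      rw [h2]; push_cast; ring
    rw [Finset.sum_congr rfl fun i _ => this i, ← Finset.mul_sum, hsum', mul_zero]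

theorem goodUF_closed (c : Fin n → ℤ) : IsClosed (GoodUF c) := by
  have : GoodUF c = ⋂ (A : Set ℕ+) (_ : ¬ SolSet c A), {u : Ultrafilter ℕ+ | A ∈ u}ᶜ := by
    ext u
    simp only [Set.mem_iInter, Set.mem_compl_iff, Set.mem_setOf_eq, GoodUF]
    constructor
    · intro h A hA hAu
      exact hA (h A hAu)
    · intro h A hAu
      by_contra hbad
      exact h A hbad hAu
  rw [this]
  exact isClosed_iInter fun A => isClosed_iInter fun _ =>
    (ultrafilter_isOpen_basic A).isClosed_compl

theorem exists_idem_goodUF (c : Fin n → ℤ) (hc : ∀ i, c i ≠ 0) (J : Finset (Fin n))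
    (hJ : J.Nonempty) (hsum : ∑ j ∈ J, c j = 0) :
    ∃ u : Ultrafilter ℕ+, u ∈ GoodUF c ∧ u * u = u := by
  obtain ⟨u, hu, hidem⟩ := exists_idempotent_in_compact_subsemigroup
    (Ultrafilter.continuous_mul_left) (GoodUF c)
    (goodUF_nonempty c hc J hJ hsum)
    ((goodUF_closed c).isCompact)
    (fun x _ y hy => goodUF_mul hy)
  exact ⟨u, hu, hidem⟩


/-- The star set of `A` w.r.t. an idempotent ultrafilter. -/
def ustar (u : Ultrafilter ℕ+) (A : Set ℕ+) : Set ℕ+ :=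
  {x | x ∈ A ∧ {y : ℕ+ | x * y ∈ A} ∈ u}

theorem ustar_subset {u : Ultrafilter ℕ+} {A : Set ℕ+} : ustar u A ⊆ A := fun _ h => h.1

theorem ustar_mem {u : Ultrafilter ℕ+} (hidem : u * u = u) {A : Set ℕ+} (hA : A ∈ u) :
    ustar u A ∈ u := by
  have h1 : {x : ℕ+ | {y : ℕ+ | x * y ∈ A} ∈ u} ∈ u := by
    rw [← hidem] at hA
    exact mem_mul_ultra.mp hA
  exact Filter.inter_mem hA h1

theorem ustar_shift {u : Ultrafilter ℕ+} (hidem : u * u = u) {A : Set ℕ+} {x : ℕ+}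
    (hx : x ∈ ustar u A) : {y : ℕ+ | x * y ∈ ustar u A} ∈ u := by
  obtain ⟨hx1, hx2⟩ := hx
  have h3 : {y : ℕ+ | {z : ℕ+ | y * z ∈ {y' : ℕ+ | x * y' ∈ A}} ∈ u} ∈ u := by
    rw [← hidem] at hx2
    exact mem_mul_ultra.mp hx2
  have h4 : {y : ℕ+ | x * y ∈ A} ∩ {y : ℕ+ | {z : ℕ+ | y * z ∈ {y' : ℕ+ | x * y' ∈ A}} ∈ u}
      ⊆ {y : ℕ+ | x * y ∈ ustar u A} := by
    intro y ⟨hy1, hy2⟩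
    refine ⟨hy1, ?_⟩
    refine Filter.mem_of_superset hy2 fun z hz => ?_
    have hz' : x * (y * z) ∈ A := hz
    rwa [← mul_assoc] at hz'
  exact Filter.mem_of_superset (Filter.inter_mem hx2 h3) h4

theorem mem_unbounded {c : Fin n → ℤ} (hn : 0 < n) {u : Ultrafilter ℕ+} (hu : u ∈ GoodUF c)
    {D : Set ℕ+} (hD : D ∈ u) (b : ℕ) : ∃ x, x ∈ D ∧ b < (x : ℕ) := by
  obtain ⟨w, hw, _⟩ := hu D hD b
  exact ⟨w ⟨0, hn⟩, (hw _).1, (hw _).2⟩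

theorem prod_pnat_coe (z : ℕ → ℕ+) (S : Finset ℕ) :
    ((∏ s ∈ S, z s : ℕ+) : ℕ) = ∏ s ∈ S, ((z s : ℕ)) :=
  map_prod PNat.coeMonoidHom z S

theorem string_exists (c : Fin n → ℤ) (hn : 0 < n) (u : Ultrafilter ℕ+) (hu : u ∈ GoodUF c)
    (hidem : u * u = u) (A : Set ℕ+) (hA : A ∈ u) (w : Fin n → ℕ+)
    (hw : ∀ i, w i ∈ ustar u A) (W : ℕ) (L : ℕ) :
    ∃ z : ℕ → ℕ+,
      (∀ t, t < L → W * (∏ s ∈ Finset.range t, (z s : ℕ)) < (z t : ℕ)) ∧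
      (∀ S : Finset ℕ, S ⊆ Finset.range L → S.Nonempty → (∏ s ∈ S, z s) ∈ ustar u A) ∧
      (∀ i, ∀ S : Finset ℕ, S ⊆ Finset.range L → (w i * ∏ s ∈ S, z s) ∈ ustar u A) := by
  classical
  induction L with
  | zero =>
    refine ⟨fun _ => 1, fun t ht => absurd ht (Nat.not_lt_zero t), ?_, ?_⟩
    · intro S hS hSne
      rw [Finset.range_zero, Finset.subset_empty] at hS
      exact absurd (hS ▸ hSne) (by simp)
    · intro i S hS
      rw [Finset.range_zero, Finset.subset_empty] at hS
      rw [hS, Finset.prod_empty, mul_one]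
      exact hw i
  | succ L IH =>
    obtain ⟨z, h1, h2, h3⟩ := IH
    -- the set of admissible next elements
    set E : Finset ℕ → Set ℕ+ := fun S => {y : ℕ+ | (∏ s ∈ S, z s) * y ∈ ustar u A} with hE
    set F : Fin n → Finset ℕ → Set ℕ+ :=
      fun i S => {y : ℕ+ | (w i * ∏ s ∈ S, z s) * y ∈ ustar u A} with hF
    have hEmem : ∀ S ∈ (Finset.range L).powerset, E S ∈ u := by
      intro S hS
      rw [Finset.mem_powerset] at hS
      rcases S.eq_empty_or_nonempty with rfl | hSne
      · have : E ∅ = {y : ℕ+ | y ∈ ustar u A} := by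
          ext y; simp [hE]
        rw [this]
        exact ustar_mem hidem hA
      · exact ustar_shift hidem (h2 S hS hSne)
    have hFmem : ∀ i : Fin n, ∀ S ∈ (Finset.range L).powerset, F i S ∈ u := by
      intro i S hS
      rw [Finset.mem_powerset] at hS
      exact ustar_shift hidem (h3 i S hS)
    set D : Set ℕ+ := ustar u A ∩
      ((⋂ S ∈ (Finset.range L).powerset, E S) ∩ ⋂ i : Fin n, ⋂ S ∈ (Finset.range L).powerset, F i S)
      with hD
    have hDu : D ∈ u := by
      refine Filter.inter_mem (ustar_mem hidem hA) (Filter.inter_mem ?_ ?_)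
      · exact (Filter.biInter_finset_mem _).mpr hEmem
      · exact Filter.iInter_mem.mpr fun i => (Filter.biInter_finset_mem _).mpr (hFmem i)
    obtain ⟨zL, hzLD, hzLbig⟩ := mem_unbounded hn hu hDu (W * ∏ s ∈ Finset.range L, ((z s : ℕ)))
    have hzLE : ∀ S : Finset ℕ, S ⊆ Finset.range L → (∏ s ∈ S, z s) * zL ∈ ustar u A := by
      intro S hS
      have h0 : zL ∈ ⋂ S ∈ (Finset.range L).powerset, E S := hzLD.2.1
      exact Set.mem_iInter₂.mp h0 S (Finset.mem_powerset.mpr hS)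
    have hzLF : ∀ i : Fin n, ∀ S : Finset ℕ, S ⊆ Finset.range L →
        (w i * ∏ s ∈ S, z s) * zL ∈ ustar u A := by
      intro i S hS
      have h0 : zL ∈ ⋂ i : Fin n, ⋂ S ∈ (Finset.range L).powerset, F i S := hzLD.2.2
      exact Set.mem_iInter₂.mp (Set.mem_iInter.mp h0 i) S (Finset.mem_powerset.mpr hS)
    have hupd : ∀ S : Finset ℕ, S ⊆ Finset.range L →
        (∏ s ∈ S, Function.update z L zL s) = ∏ s ∈ S, z s := by
      intro S hS
      refine Finset.prod_congr rfl fun s hs => ?_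
      have hsL : s ≠ L := by have := hS hs; rw [Finset.mem_range] at this; omega
      exact Function.update_of_ne hsL _ _
    have hsubset : ∀ S : Finset ℕ, S ⊆ Finset.range (L+1) → L ∉ S → S ⊆ Finset.range L := by
      intro S hS hLS s hs
      have h' := hS hs
      rw [Finset.mem_range] at h' ⊢
      rcases Nat.lt_succ_iff_lt_or_eq.mp h' with h'' | h''
      · exact h''
      · exact absurd (h'' ▸ hs) hLS
    refine ⟨Function.update z L zL, ?_, ?_, ?_⟩
    · intro t ht
      rcases Nat.lt_succ_iff_lt_or_eq.mp ht with htL | htL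
      · have e1 : (∏ s ∈ Finset.range t, ((Function.update z L zL s : ℕ+) : ℕ)) =
            ∏ s ∈ Finset.range t, ((z s : ℕ)) := by
          refine Finset.prod_congr rfl fun s hs => ?_
          rw [Finset.mem_range] at hs
          have : s ≠ L := by omega
          rw [Function.update_of_ne this]
        have e2 : Function.update z L zL t = z t := Function.update_of_ne (by omega) _ _
        rw [e1, e2]
        exact h1 t htL
      · have e1 : (∏ s ∈ Finset.range t, ((Function.update z L zL s : ℕ+) : ℕ)) =
            ∏ s ∈ Finset.range t, ((z s : ℕ)) := by
          refine Finset.prod_congr rfl fun s hs => ?_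
          rw [Finset.mem_range] at hs
          have hsne : s ≠ L := by omega
          rw [Function.update_of_ne hsne]
        have e2 : Function.update z L zL t = zL := by
          rw [htL]; exact Function.update_self _ _ _
        rw [e1, e2, htL]
        exact hzLbig
    · intro S hS hSne
      by_cases hLS : L ∈ S
      · have hsub : S.erase L ⊆ Finset.range L := by
          intro s hs
          have h'' := hS (Finset.mem_of_mem_erase hs)
          rw [Finset.mem_range] at h'' ⊢
          have := Finset.ne_of_mem_erase hs
          omega
        rw [← Finset.mul_prod_erase S _ hLS, Function.update_self,
          hupd _ hsub, mul_comm]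
        exact hzLE _ hsub
      · have hsub := hsubset S hS hLS
        rw [hupd S hsub]
        exact h2 S hsub hSne
    · intro i S hS
      by_cases hLS : L ∈ S
      · have hsub : S.erase L ⊆ Finset.range L := by
          intro s hs
          have h'' := hS (Finset.mem_of_mem_erase hs)
          rw [Finset.mem_range] at h'' ⊢
          have := Finset.ne_of_mem_erase hs
          omega
        rw [← Finset.mul_prod_erase S _ hLS, Function.update_self, hupd _ hsub,
          mul_comm zL _, ← mul_assoc]
        exact hzLF i _ hsub
      · have hsub := hsubset S hS hLS
        rw [hupd S hsub]
        exact h3 i S hsub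


open Finset

/-- Asymmetric helper: products over distinct index sets of a superincreasing sequence,
with bounded multipliers, are distinct. -/
theorem superinc_ne_aux {z : ℕ → ℕ+} {W L : ℕ}
    (hz : ∀ t, t < L → W * (∏ s ∈ range t, (z s : ℕ)) < (z t : ℕ))
    {a b : ℕ} (ha : 1 ≤ a) (haW : a ≤ W) (hb : 1 ≤ b) (hbW : b ≤ W)
    {S T : Finset ℕ} (hS : S ⊆ range L) (hT : T ⊆ range L)
    {m : ℕ} (hmS : m ∈ S) (hmT : m ∉ T) (hmax : ∀ t, m < t → (t ∈ S ↔ t ∈ T)) :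
    a * ∏ s ∈ S, (z s : ℕ) ≠ b * ∏ s ∈ T, (z s : ℕ) := by
  intro heq
  have hsplitS : (∏ s ∈ S, (z s : ℕ)) =
      (∏ s ∈ S.filter (fun t => t ≤ m), (z s : ℕ)) *
      (∏ s ∈ S.filter (fun t => ¬ t ≤ m), (z s : ℕ)) :=
    (Finset.prod_filter_mul_prod_filter_not S _ _).symm
  have hsplitT : (∏ s ∈ T, (z s : ℕ)) =
      (∏ s ∈ T.filter (fun t => t ≤ m), (z s : ℕ)) *
      (∏ s ∈ T.filter (fun t => ¬ t ≤ m), (z s : ℕ)) :=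
    (Finset.prod_filter_mul_prod_filter_not T _ _).symm
  have hhigh : S.filter (fun t => ¬ t ≤ m) = T.filter (fun t => ¬ t ≤ m) := by
    ext t
    simp only [Finset.mem_filter, not_le]
    constructor
    · rintro ⟨htS, htm⟩; exact ⟨(hmax t htm).mp htS, htm⟩
    · rintro ⟨htT, htm⟩; exact ⟨(hmax t htm).mpr htT, htm⟩
  have hprodpos : 0 < ∏ s ∈ S.filter (fun t => ¬ t ≤ m), (z s : ℕ) :=
    Finset.prod_pos fun s _ => (z s).pos
  have hcancel : a * ∏ s ∈ S.filter (fun t => t ≤ m), (z s : ℕ) =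
      b * ∏ s ∈ T.filter (fun t => t ≤ m), (z s : ℕ) := by
    have h1 : (a * ∏ s ∈ S.filter (fun t => t ≤ m), (z s : ℕ)) *
        (∏ s ∈ S.filter (fun t => ¬ t ≤ m), (z s : ℕ)) =
        (b * ∏ s ∈ T.filter (fun t => t ≤ m), (z s : ℕ)) *
        (∏ s ∈ S.filter (fun t => ¬ t ≤ m), (z s : ℕ)) := by
      calc (a * ∏ s ∈ S.filter (fun t => t ≤ m), (z s : ℕ)) *
          (∏ s ∈ S.filter (fun t => ¬ t ≤ m), (z s : ℕ))
          = a * ∏ s ∈ S, (z s : ℕ) := by rw [hsplitS]; ring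
        _ = b * ∏ s ∈ T, (z s : ℕ) := heq
        _ = (b * ∏ s ∈ T.filter (fun t => t ≤ m), (z s : ℕ)) *
            (∏ s ∈ T.filter (fun t => ¬ t ≤ m), (z s : ℕ)) := by rw [hsplitT]; ring
        _ = _ := by rw [hhigh]
    exact Nat.eq_of_mul_eq_mul_right hprodpos h1
  have hmL : m < L := Finset.mem_range.mp (hS hmS)
  have hlow1 : (z m : ℕ) ≤ a * ∏ s ∈ S.filter (fun t => t ≤ m), (z s : ℕ) := by
    have h1 : (z m : ℕ) ≤ ∏ s ∈ S.filter (fun t => t ≤ m), (z s : ℕ) :=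
      Finset.single_le_prod' (f := fun s => ((z s : ℕ))) (fun s _ => (z s).pos)
        (Finset.mem_filter.mpr ⟨hmS, le_rfl⟩)
    calc (z m : ℕ) ≤ ∏ s ∈ S.filter (fun t => t ≤ m), (z s : ℕ) := h1
      _ = 1 * ∏ s ∈ S.filter (fun t => t ≤ m), (z s : ℕ) := (one_mul _).symm
      _ ≤ a * ∏ s ∈ S.filter (fun t => t ≤ m), (z s : ℕ) := Nat.mul_le_mul_right _ ha
  have hlow2 : b * ∏ s ∈ T.filter (fun t => t ≤ m), (z s : ℕ) < (z m : ℕ) := by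
    have hsub : T.filter (fun t => t ≤ m) ⊆ range m := by
      intro t ht
      rw [Finset.mem_range]
      obtain ⟨htT, htm⟩ := Finset.mem_filter.mp ht
      rcases Nat.lt_or_ge t m with h | h
      · exact h
      · exact absurd (le_antisymm htm h ▸ htT) hmT
    have h2 : (∏ s ∈ T.filter (fun t => t ≤ m), (z s : ℕ)) ≤ ∏ s ∈ range m, (z s : ℕ) :=
      Finset.prod_le_prod_of_subset_of_one_le' hsub (fun s _ _ => (z s).pos)
    calc b * ∏ s ∈ T.filter (fun t => t ≤ m), (z s : ℕ)
        ≤ W * ∏ s ∈ range m, (z s : ℕ) := Nat.mul_le_mul hbW h2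
      _ < (z m : ℕ) := hz m hmL
  omega

/-- Products over distinct subsets of a superincreasing sequence, with bounded
multipliers, are distinct. -/
theorem superinc_ne {z : ℕ → ℕ+} {W L : ℕ}
    (hz : ∀ t, t < L → W * (∏ s ∈ range t, (z s : ℕ)) < (z t : ℕ))
    {a b : ℕ} (ha : 1 ≤ a) (haW : a ≤ W) (hb : 1 ≤ b) (hbW : b ≤ W)
    {S T : Finset ℕ} (hS : S ⊆ range L) (hT : T ⊆ range L) (hne : S ≠ T) :
    a * ∏ s ∈ S, (z s : ℕ) ≠ b * ∏ s ∈ T, (z s : ℕ) := by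
  classical
  set U : Finset ℕ := (S \ T) ∪ (T \ S) with hU
  have hUne : U.Nonempty := by
    by_contra hUe
    rw [Finset.not_nonempty_iff_eq_empty, hU, Finset.union_eq_empty] at hUe
    apply hne
    apply Finset.Subset.antisymm
    · intro x hx
      by_contra hxT
      have : x ∈ S \ T := Finset.mem_sdiff.mpr ⟨hx, hxT⟩
      rw [hUe.1] at this
      exact absurd this (Finset.notMem_empty x)
    · intro x hx
      by_contra hxS
      have : x ∈ T \ S := Finset.mem_sdiff.mpr ⟨hx, hxS⟩
      rw [hUe.2] at this
      exact absurd this (Finset.notMem_empty x)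
  set m : ℕ := U.max' hUne with hm
  have hmU : m ∈ U := U.max'_mem hUne
  have hmax : ∀ t, m < t → (t ∈ S ↔ t ∈ T) := by
    intro t hmt
    by_contra hiff
    have htU : t ∈ U := by
      rw [hU, Finset.mem_union, Finset.mem_sdiff, Finset.mem_sdiff]
      by_cases h1 : t ∈ S
      · left; exact ⟨h1, fun h2 => hiff ⟨fun _ => h2, fun _ => h1⟩⟩
      · right
        refine ⟨?_, h1⟩
        by_contra h2
        exact hiff ⟨fun h3 => absurd h3 h1, fun h3 => absurd h3 h2⟩
    exact absurd (U.le_max' t htU) (not_le.mpr hmt)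
  rw [hU, Finset.mem_union, Finset.mem_sdiff, Finset.mem_sdiff] at hmU
  rcases hmU with ⟨hmS, hmT⟩ | ⟨hmT, hmS⟩
  · exact superinc_ne_aux hz ha haW hb hbW hS hT hmS hmT hmax
  · intro heq
    exact superinc_ne_aux hz hb hbW ha haW hT hS hmT hmS
      (fun t ht => (hmax t ht).symm) heq.symm


/-- Let `n ≥ 3`, let `c₁,…,cₙ` be nonzero integers with `∑_{j∈J} c_j = 0` for
some nonempty `J`, and let `k_i ≥ 2`. Then `∑ᵢ cᵢ ∏ⱼ y_{i,j} = 0` is partition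
regular on `ℕ` with all the variables `y_{i,j}` pairwise distinct. -/
theorem pr_products_rado {n : ℕ} (hn : 3 ≤ n)
    (c : Fin n → ℤ) (hc : ∀ i, c i ≠ 0)
    (J : Finset (Fin n)) (hJ : J.Nonempty) (hsum : ∑ j ∈ J, c j = 0)
    (k : Fin n → ℕ) (hk : ∀ i, 2 ≤ k i) :
    ∀ (r : ℕ) (C : ℕ+ → Fin r), ∃ y : ∀ i, Fin (k i) → ℕ+,
      (∀ i j i' j', C (y i j) = C (y i' j')) ∧
      Function.Injective (fun q : Σ i, Fin (k i) => y q.1 q.2) ∧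
      (∑ i, c i * ∏ j, ((y i j : ℕ) : ℤ)) = 0 := by
  classical
  intro r C
  have hn0 : 0 < n := by omega
  -- an idempotent ultrafilter all of whose members are solution-rich
  obtain ⟨u, hu, hidem⟩ := exists_idem_goodUF c hc J hJ hsum
  -- a color class belonging to u
  have hcover : (⋃ γ : Fin r, C ⁻¹' {γ}) ∈ u := by
    have : (⋃ γ : Fin r, C ⁻¹' {γ}) = Set.univ := by
      ext x; simp
    rw [this]
    exact Filter.univ_mem
  have hgam : ∃ γ : Fin r, C ⁻¹' {γ} ∈ u := by
    have h2 : (⋃ γ ∈ (Set.univ : Set (Fin r)), C ⁻¹' {γ}) ∈ u := by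
      simpa using hcover
    obtain ⟨γ, _, hγ⟩ := (Ultrafilter.finite_biUnion_mem_iff Set.finite_univ).mp h2
    exact ⟨γ, hγ⟩
  obtain ⟨γ, hAu⟩ := hgam
  set A : Set ℕ+ := C ⁻¹' {γ} with hAdef
  -- a monochromatic solution of the linear equation inside `ustar u A`
  obtain ⟨w, hw, hwsum⟩ := hu (ustar u A) (ustar_mem hidem hAu) 0
  have hwstar : ∀ i, w i ∈ ustar u A := fun i => (hw i).1
  -- global bound on the w's
  set W : ℕ := Finset.univ.sup (fun i => ((w i : ℕ))) with hWdef
  have hWb : ∀ i, (w i : ℕ) ≤ W := fun i => Finset.le_sup (f := fun i => ((w i : ℕ))) (Finset.mem_univ i)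
  have hW1 : 1 ≤ W := le_trans (w ⟨0, hn0⟩).one_le (hWb ⟨0, hn0⟩)
  -- index bookkeeping
  set off : Fin n → ℕ := fun i => n + ∑ j ∈ Finset.univ.filter (fun j : Fin n => j < i), (k j - 1)
    with hoffdef
  set L : ℕ := n + ∑ j : Fin n, (k j - 1) with hLdef
  have hoff_mono : ∀ i i' : Fin n, i < i' → off i + (k i - 1) ≤ off i' := by
    intro i i' hii
    have hsub : insert i (Finset.univ.filter (fun j : Fin n => j < i)) ⊆
        Finset.univ.filter (fun j : Fin n => j < i') := by
      intro j hj
      rcases Finset.mem_insert.mp hj with rfl | hj'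
      · exact Finset.mem_filter.mpr ⟨Finset.mem_univ _, hii⟩
      · exact Finset.mem_filter.mpr ⟨Finset.mem_univ _,
          lt_trans (Finset.mem_filter.mp hj').2 hii⟩
    have hins : (∑ j ∈ insert i (Finset.univ.filter (fun j : Fin n => j < i)), (k j - 1)) =
        (k i - 1) + ∑ j ∈ Finset.univ.filter (fun j : Fin n => j < i), (k j - 1) :=
      Finset.sum_insert (by simp)
    have hle : ((k i - 1) + ∑ j ∈ Finset.univ.filter (fun j : Fin n => j < i), (k j - 1)) ≤
        ∑ j ∈ Finset.univ.filter (fun j : Fin n => j < i'), (k j - 1) := by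
      rw [← hins]
      exact Finset.sum_le_sum_of_subset hsub
    simp only [hoffdef]
    omega
  have hoffL : ∀ i, off i + (k i - 1) ≤ L := by
    intro i
    have hsub : insert i (Finset.univ.filter (fun j : Fin n => j < i)) ⊆ Finset.univ :=
      Finset.subset_univ _
    have hins : (∑ j ∈ insert i (Finset.univ.filter (fun j : Fin n => j < i)), (k j - 1)) =
        (k i - 1) + ∑ j ∈ Finset.univ.filter (fun j : Fin n => j < i), (k j - 1) :=
      Finset.sum_insert (by simp)
    have hle : ((k i - 1) + ∑ j ∈ Finset.univ.filter (fun j : Fin n => j < i), (k j - 1)) ≤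
        ∑ j : Fin n, (k j - 1) := by
      rw [← hins]
      exact Finset.sum_le_sum_of_subset hsub
    simp only [hoffdef, hLdef]
    omega
  set B : Fin n → Finset ℕ := fun i => (Finset.range (k i - 1)).image (fun l => off i + l)
    with hBdef
  have hBsub : ∀ i, B i ⊆ range L := by
    intro i t ht
    obtain ⟨l, hl, rfl⟩ := Finset.mem_image.mp ht
    rw [Finset.mem_range] at hl ⊢
    have := hoffL i
    omega
  have hBmem : ∀ i t, t ∈ B i ↔ ∃ l, l < k i - 1 ∧ t = off i + l := by
    intro i t
    simp only [hBdef, Finset.mem_image, Finset.mem_range]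
    constructor
    · rintro ⟨l, hl, rfl⟩; exact ⟨l, hl, rfl⟩
    · rintro ⟨l, hl, rfl⟩; exact ⟨l, hl, rfl⟩
  have hBdisj : ∀ i i', i ≠ i' → ∀ t, t ∈ B i → t ∉ B i' := by
    have key : ∀ i i' : Fin n, i < i' → ∀ t, t ∈ B i → t ∉ B i' := by
      intro i i' hii t hti hti'
      obtain ⟨l, hl, rfl⟩ := (hBmem i t).mp hti
      obtain ⟨l', hl', heq⟩ := (hBmem i' _).mp hti'
      have := hoff_mono i i' hii
      omega
    intro i i' hne t hti hti'
    rcases lt_or_gt_of_ne hne with h | h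
    · exact key i i' h t hti hti'
    · exact key i' i h t hti' hti
  have hoffmemB : ∀ i, off i ∈ B i := by
    intro i
    rw [hBmem]
    exact ⟨0, by have := hk i; omega, by omega⟩
  set G : Fin n → Finset ℕ := fun i => (range L) \ B i with hGdef
  have hGsub : ∀ i, G i ⊆ range L := fun i => Finset.sdiff_subset
  have hGcard : ∀ i, 2 ≤ (G i).card := by
    intro i
    have h1 : (B i).card = k i - 1 := by
      rw [hBdef]
      rw [Finset.card_image_of_injective _ (add_right_injective (off i))]
      exact Finset.card_range _
    have h2 : (G i).card = L - (B i).card := by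
      simp only [hGdef]
      rw [Finset.card_sdiff_of_subset (hBsub i), Finset.card_range]
    have h3 : (k i - 1) ≤ ∑ j : Fin n, (k j - 1) :=
      Finset.single_le_sum (f := fun j => k j - 1) (fun j _ => Nat.zero_le _) (Finset.mem_univ i)
    rw [h2, h1, hLdef]
    omega
  -- the string
  obtain ⟨z, hz1, hz2, hz3⟩ := string_exists c hn0 u hu hidem A hAu w hwstar W L
  -- the solution
  set y : ∀ i, Fin (k i) → ℕ+ := fun i j =>
    if (j : ℕ) = 0 then w i * ∏ t ∈ G i, z t else z (off i + ((j : ℕ) - 1)) with hydef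
  -- values
  have hyval : ∀ i (j : Fin (k i)), ((y i j : ℕ)) =
      if (j : ℕ) = 0 then (w i : ℕ) * ∏ t ∈ G i, (z t : ℕ) else 1 * ∏ t ∈ {off i + ((j : ℕ) - 1)}, (z t : ℕ) := by
    intro i j
    simp only [hydef]
    by_cases hj : (j : ℕ) = 0
    · rw [if_pos hj, if_pos hj, PNat.mul_coe, prod_pnat_coe]
    · rw [if_neg hj, if_neg hj, Finset.prod_singleton, one_mul]
  -- membership of values in A
  have hymem : ∀ i j, y i j ∈ A := by
    intro i j
    simp only [hydef]
    by_cases hj : (j : ℕ) = 0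
    · rw [if_pos hj]
      exact ustar_subset (hz3 i (G i) (hGsub i))
    · rw [if_neg hj]
      have ht : off i + ((j : ℕ) - 1) ∈ B i := by
        rw [hBmem]
        refine ⟨(j : ℕ) - 1, ?_, rfl⟩
        have := j.isLt
        omega
      have h1 : ({off i + ((j : ℕ) - 1)} : Finset ℕ) ⊆ range L :=
        Finset.singleton_subset_iff.mpr (hBsub i ht)
      have h2 := hz2 _ h1 (Finset.singleton_nonempty _)
      rw [Finset.prod_singleton] at h2
      exact ustar_subset h2
  refine ⟨y, ?_, ?_, ?_⟩
  · intro i j i' j'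
    have h1 : C (y i j) = γ := hymem i j
    have h2 : C (y i' j') = γ := hymem i' j'
    rw [h1, h2]
  · -- injectivity
    rintro ⟨i, j⟩ ⟨i', j'⟩ hq
    simp only at hq
    -- values are distinct unless indices coincide
    have hyne : ∀ (i1 i2 : Fin n) (j1 : Fin (k i1)) (j2 : Fin (k i2)),
        (⟨i1, j1⟩ : Σ i, Fin (k i)) ≠ ⟨i2, j2⟩ → ((y i1 j1 : ℕ)) ≠ ((y i2 j2 : ℕ)) := by
      intro i1 i2 j1 j2 hne
      rw [hyval, hyval]
      by_cases hj1 : (j1 : ℕ) = 0 <;> by_cases hj2 : (j2 : ℕ) = 0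
      · -- both are the "big" slots; so i1 ≠ i2 and G i1 ≠ G i2
        rw [if_pos hj1, if_pos hj2]
        have hii : i1 ≠ i2 := by
          rintro rfl
          apply hne
          congr 1
          · exact (Fin.ext (hj1.trans hj2.symm))
        have hGne : G i1 ≠ G i2 := by
          intro hGeq
          have h1 : off i1 ∉ G i1 := by
            rw [hGdef]
            simp only [Finset.mem_sdiff, not_and, not_not]
            intro _
            exact hoffmemB i1
          have h2 : off i1 ∈ G i2 := by
            rw [hGdef]
            refine Finset.mem_sdiff.mpr ⟨?_, ?_⟩
            · exact hBsub i1 (hoffmemB i1)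
            · exact hBdisj i1 i2 hii _ (hoffmemB i1)
          rw [hGeq] at h1
          exact h1 h2
        exact superinc_ne hz1 (w i1).one_le (hWb i1) (w i2).one_le (hWb i2)
          (hGsub i1) (hGsub i2) hGne
      · rw [if_pos hj1, if_neg hj2]
        have hTsub : ({off i2 + ((j2 : ℕ) - 1)} : Finset ℕ) ⊆ range L := by
          refine Finset.singleton_subset_iff.mpr (hBsub i2 ?_)
          rw [hBmem]
          exact ⟨(j2 : ℕ) - 1, by have := j2.isLt; omega, rfl⟩
        have hGne : G i1 ≠ ({off i2 + ((j2 : ℕ) - 1)} : Finset ℕ) := by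
          intro h
          have := hGcard i1
          rw [h, Finset.card_singleton] at this
          omega
        exact superinc_ne hz1 (w i1).one_le (hWb i1) le_rfl hW1 (hGsub i1) hTsub hGne
      · rw [if_neg hj1, if_pos hj2]
        have hTsub : ({off i1 + ((j1 : ℕ) - 1)} : Finset ℕ) ⊆ range L := by
          refine Finset.singleton_subset_iff.mpr (hBsub i1 ?_)
          rw [hBmem]
          exact ⟨(j1 : ℕ) - 1, by have := j1.isLt; omega, rfl⟩
        have hGne : ({off i1 + ((j1 : ℕ) - 1)} : Finset ℕ) ≠ G i2 := by
          intro h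
          have := hGcard i2
          rw [← h, Finset.card_singleton] at this
          omega
        exact superinc_ne hz1 le_rfl hW1 (w i2).one_le (hWb i2) hTsub (hGsub i2) hGne
      · rw [if_neg hj1, if_neg hj2]
        set t1 := off i1 + ((j1 : ℕ) - 1) with ht1
        set t2 := off i2 + ((j2 : ℕ) - 1) with ht2
        have ht1B : t1 ∈ B i1 := by
          rw [hBmem]; exact ⟨(j1 : ℕ) - 1, by have := j1.isLt; omega, rfl⟩
        have ht2B : t2 ∈ B i2 := by
          rw [hBmem]; exact ⟨(j2 : ℕ) - 1, by have := j2.isLt; omega, rfl⟩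
        have htne : t1 ≠ t2 := by
          intro hteq
          by_cases hii : i1 = i2
          · subst hii
            apply hne
            have : (j1 : ℕ) = (j2 : ℕ) := by omega
            congr 1
            exact Fin.ext this
          · exact hBdisj i1 i2 hii t1 ht1B (hteq ▸ ht2B)
        have hSne : ({t1} : Finset ℕ) ≠ {t2} := by
          simpa using htne
        exact superinc_ne hz1 le_rfl hW1 le_rfl hW1
          (Finset.singleton_subset_iff.mpr (hBsub i1 ht1B))
          (Finset.singleton_subset_iff.mpr (hBsub i2 ht2B)) hSne
    by_contra hne
    exact hyne i i' j j' (by exact fun h => hne h) (by rw [hq])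
  · -- the equation
    have hprod : ∀ i, (∏ j, ((y i j : ℕ) : ℤ)) =
        ((w i : ℕ) : ℤ) * ((∏ t ∈ range L, (z t : ℕ) : ℕ) : ℤ) := by
      intro i
      have hstepA : (∏ j, ((y i j : ℕ) : ℤ)) = (((∏ j, (y i j : ℕ) : ℕ)) : ℤ) := by
        rw [Nat.cast_prod]
      have hB : (∏ j, ((y i j : ℕ))) = (w i : ℕ) * ∏ t ∈ range L, (z t : ℕ) := by
        set f : ℕ → ℕ := fun jn =>
          if jn = 0 then (w i : ℕ) * ∏ t ∈ G i, (z t : ℕ) else (z (off i + (jn - 1)) : ℕ) with hf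
        have h1 : (∏ j : Fin (k i), ((y i j : ℕ))) = ∏ j : Fin (k i), f ((j : ℕ)) := by
          refine Finset.prod_congr rfl fun j _ => ?_
          simp only [hydef, hf]
          by_cases hj : (j : ℕ) = 0
          · rw [if_pos hj, if_pos hj, PNat.mul_coe, prod_pnat_coe]
          · rw [if_neg hj, if_neg hj]
        have hki : k i = (k i - 1) + 1 := by have := hk i; omega
        have h2 : (∏ j : Fin (k i), f ((j : ℕ))) = ∏ jn ∈ range (k i), f jn :=
          Fin.prod_univ_eq_prod_range f (k i)
        have h3 : (∏ jn ∈ range (k i), f jn) =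
            (∏ jn ∈ range (k i - 1), f (jn + 1)) * f 0 := by
          rw [hki]
          exact Finset.prod_range_succ' f (k i - 1)
        have hf0 : f 0 = (w i : ℕ) * ∏ t ∈ G i, (z t : ℕ) := by simp [hf]
        have hfs : ∀ jn, f (jn + 1) = (z (off i + jn) : ℕ) := by
          intro jn; simp [hf]
        have hBprod : (∏ jn ∈ range (k i - 1), (z (off i + jn) : ℕ)) =
            ∏ t ∈ B i, (z t : ℕ) := by
          simp only [hBdef]
          rw [Finset.prod_image]
          intro x _ y _ h
          exact add_left_cancel h
        have hsd : (∏ t ∈ G i, (z t : ℕ)) * (∏ t ∈ B i, (z t : ℕ)) =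
            ∏ t ∈ range L, (z t : ℕ) := by
          simp only [hGdef]
          exact Finset.prod_sdiff (hBsub i)
        rw [h1, h2, h3, hf0, Finset.prod_congr rfl fun jn _ => hfs jn, hBprod]
        calc (∏ t ∈ B i, (z t : ℕ)) * ((w i : ℕ) * ∏ t ∈ G i, (z t : ℕ))
            = (w i : ℕ) * ((∏ t ∈ G i, (z t : ℕ)) * (∏ t ∈ B i, (z t : ℕ))) := by ring
          _ = (w i : ℕ) * ∏ t ∈ range L, (z t : ℕ) := by rw [hsd]
      rw [hstepA, hB, Nat.cast_mul]
    rw [Finset.sum_congr rfl fun i _ => by rw [hprod i]]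
    have : (∑ i, c i * (((w i : ℕ) : ℤ) * ((∏ t ∈ range L, (z t : ℕ) : ℕ) : ℤ))) =
        ((∏ t ∈ range L, (z t : ℕ) : ℕ) : ℤ) * ∑ i, c i * ((w i : ℕ) : ℤ) := by
      rw [Finset.mul_sum]
      exact Finset.sum_congr rfl fun i _ => by ring
    rw [this, hwsum, mul_zero]
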